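/- If sup_{v ∈ K} ‖ĝ_n(ω)(v) − g(v)‖ → 0 in probability and max_{1 ≤ i ≤ n} ‖V̂_{i,n}(ω) − V_i(ω)‖ → 0 in probability as n → ∞, then ‖(1/n)·Σ_{i=1}^n Q_i ·ᵥ ĝ_n(V̂_{i,n}) − (1/n)·Σ_{i=1}^n Q_i ·ᵥ g(V_i)‖ → 0 in probability. (Core step of the consistency proof for the plug-in estimator of the average partial effect.) -/

import Mathlib

open MeasureTheory Matrix Filter ProbabilityTheory

/-- Operator norm of a matrix with respect to the Euclidean norms. -/
noncomputable def matrixEuclideanOpNorm {d m : ℕ} (A : Matrix (Fin d) (Fin m) ℝ) : ℝ :=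
  ‖LinearMap.toContinuousLinearMap (Matrix.toEuclideanLin A)‖

open scoped ENNReal NNReal

lemma aux_norm_le_euclidean {k : ℕ} (y : Fin k → ℝ) :
    ‖y‖ ≤ ‖(WithLp.equiv 2 (Fin k → ℝ)).symm y‖ := by
  apply pi_norm_le_iff_of_nonneg (norm_nonneg _) |>.2
  intro i
  rw [EuclideanSpace.norm_eq]
  have h1 : ‖y i‖ ^ 2 ≤ ∑ j, ‖((WithLp.equiv 2 (Fin k → ℝ)).symm y) j‖ ^ 2 := by
    have : ((WithLp.equiv 2 (Fin k → ℝ)).symm y) = y := rfl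
    rw [this]
    exact Finset.single_le_sum (fun j _ => sq_nonneg ‖y j‖) (Finset.mem_univ i)
  calc ‖y i‖ = Real.sqrt (‖y i‖ ^ 2) := by rw [Real.sqrt_sq (norm_nonneg _)]
    _ ≤ _ := Real.sqrt_le_sqrt h1

lemma aux_euclidean_le_norm {k : ℕ} (x : Fin k → ℝ) :
    ‖(WithLp.equiv 2 (Fin k → ℝ)).symm x‖ ≤ Real.sqrt k * ‖x‖ := by
  rw [EuclideanSpace.norm_eq]
  have h1 : ∑ j, ‖((WithLp.equiv 2 (Fin k → ℝ)).symm x) j‖ ^ 2 ≤ (k : ℝ) * ‖x‖ ^ 2 := by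
    have he : ((WithLp.equiv 2 (Fin k → ℝ)).symm x) = x := rfl
    rw [he]
    calc ∑ j, ‖x j‖ ^ 2 ≤ ∑ _j : Fin k, ‖x‖ ^ 2 := by
          apply Finset.sum_le_sum
          intro j _
          exact pow_le_pow_left₀ (norm_nonneg _) (norm_le_pi_norm x j) 2
      _ = (k : ℝ) * ‖x‖ ^ 2 := by simp [mul_comm]
  calc Real.sqrt _ ≤ Real.sqrt ((k : ℝ) * ‖x‖ ^ 2) := Real.sqrt_le_sqrt h1
    _ = Real.sqrt k * ‖x‖ := by
        rw [Real.sqrt_mul (Nat.cast_nonneg k), Real.sqrt_sq (norm_nonneg _)]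

lemma aux_mulVec_norm_le {d m : ℕ} (A : Matrix (Fin d) (Fin m) ℝ) (x : Fin m → ℝ) :
    ‖A *ᵥ x‖ ≤ matrixEuclideanOpNorm A * (Real.sqrt m * ‖x‖) := by
  have h1 : ‖A *ᵥ x‖ ≤ ‖(WithLp.equiv 2 (Fin d → ℝ)).symm (A *ᵥ x)‖ := aux_norm_le_euclidean _
  have h2 : (WithLp.equiv 2 (Fin d → ℝ)).symm (A *ᵥ x)
      = (LinearMap.toContinuousLinearMap (Matrix.toEuclideanLin A))
        ((WithLp.equiv 2 (Fin m → ℝ)).symm x) := by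
    simp [Matrix.toEuclideanLin_apply_piLp_toLp]
  calc ‖A *ᵥ x‖ ≤ ‖(LinearMap.toContinuousLinearMap (Matrix.toEuclideanLin A))
        ((WithLp.equiv 2 (Fin m → ℝ)).symm x)‖ := by rw [← h2]; exact h1
    _ ≤ matrixEuclideanOpNorm A * ‖(WithLp.equiv 2 (Fin m → ℝ)).symm x‖ :=
        ContinuousLinearMap.le_opNorm _ _
    _ ≤ matrixEuclideanOpNorm A * (Real.sqrt m * ‖x‖) := by
        apply mul_le_mul_of_nonneg_left (aux_euclidean_le_norm x) (norm_nonneg _)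

lemma aux_opNorm_nonneg {d m : ℕ} (A : Matrix (Fin d) (Fin m) ℝ) :
    0 ≤ matrixEuclideanOpNorm A := norm_nonneg _

lemma aux_continuous {d m : ℕ} :
    Continuous (fun A : Fin d → Fin m → ℝ => matrixEuclideanOpNorm (Matrix.of A)) := by
  have : Continuous (fun A : Fin d → Fin m → ℝ =>
      LinearMap.toContinuousLinearMap (Matrix.toEuclideanLin (Matrix.of A))) := by
    let L : (Fin d → Fin m → ℝ) →ₗ[ℝ]
        (EuclideanSpace ℝ (Fin m) →L[ℝ] EuclideanSpace ℝ (Fin d)) :=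
      { toFun := fun A => LinearMap.toContinuousLinearMap (Matrix.toEuclideanLin (Matrix.of A))
        map_add' := by
          intro A B; ext x
          simp [Matrix.toEuclideanLin_apply, Matrix.mulVec, dotProduct, add_mul,
            Finset.sum_add_distrib]
        map_smul' := by
          intro r A; ext x
          simp [Matrix.toEuclideanLin_apply, Matrix.mulVec, dotProduct, mul_assoc,
            Finset.mul_sum] }
    exact L.continuous_of_finiteDimensional
  exact continuous_norm.comp this


set_option maxHeartbeats 1000000 in
/-- Core step of the consistency proof for the plug-in estimator of the average partial
effect: if `ĝ_n → g` uniformly on `K` in probability and the generated points `V̂_{i,n}`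
converge uniformly to `V_i` in probability, then the sample average of `Q_i ·ᵥ ĝ_n(V̂_{i,n})`
is asymptotically equivalent (in probability) to the sample average of `Q_i ·ᵥ g(V_i)`. -/
theorem plug_in_sample_average_consistency
    {Ω : Type*} {mΩ : MeasurableSpace Ω} (P : Measure Ω) [IsProbabilityMeasure P]
    (p m d : ℕ) (hp : 0 < p) (hm : 0 < m) (hd : 0 < d)
    (K : Set (Fin p → ℝ)) (hK : IsCompact K)
    (g : (Fin p → ℝ) → (Fin m → ℝ)) (hg : ∃ c : NNReal, LipschitzOnWith c g K)
    (Q : ℕ → Ω → (Fin d → Fin m → ℝ))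
    (V : ℕ → Ω → (Fin p → ℝ)) (hVK : ∀ i ω, V i ω ∈ K)
    (hiid_indep : iIndepFun (fun i ω => (Q i ω, V i ω)) P)
    (hiid_ident : ∀ i,
      IdentDistrib (fun ω => (Q i ω, V i ω)) (fun ω => (Q 0 ω, V 0 ω)) P P)
    (hQint : Integrable (fun ω => matrixEuclideanOpNorm (Matrix.of (Q 0 ω))) P)
    (ghat : ℕ → Ω → (Fin p → ℝ) → (Fin m → ℝ))
    (Vhat : ℕ → ℕ → Ω → (Fin p → ℝ)) (hVhatK : ∀ n i ω, Vhat n i ω ∈ K)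
    (hg_unif : ∀ ε > (0 : ℝ), Tendsto
      (fun (n : ℕ) => P {ω | ∃ v ∈ K, ε < ‖ghat n ω v - g v‖}) atTop (nhds 0))
    (hV_unif : ∀ ε > (0 : ℝ), Tendsto
      (fun (n : ℕ) => P {ω | ∃ i < n, ε < ‖Vhat n i ω - V i ω‖}) atTop (nhds 0)) :
    ∀ ε > (0 : ℝ), Tendsto
      (fun (n : ℕ) => P {ω | ε <
        ‖(n : ℝ)⁻¹ • (∑ i ∈ Finset.range n, Matrix.of (Q i ω) *ᵥ ghat n ω (Vhat n i ω))
          - (n : ℝ)⁻¹ • (∑ i ∈ Finset.range n, Matrix.of (Q i ω) *ᵥ g (V i ω))‖})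
      atTop (nhds 0) := by
  intro ε hε
  obtain ⟨c, hgc⟩ := hg
  set cR : ℝ := (c : ℝ) with hcR
  have hcR0 : 0 ≤ cR := c.coe_nonneg
  set f : ℕ → Ω → ℝ := fun i ω => matrixEuclideanOpNorm (Matrix.of (Q i ω)) with hf
  have hQae : ∀ i, AEMeasurable (Q i) P := fun i =>
    measurable_fst.comp_aemeasurable (hiid_ident i).aemeasurable_fst
  have hfae : ∀ i, AEMeasurable (f i) P := fun i =>
    aux_continuous.measurable.comp_aemeasurable (hQae i)
  have hfnonneg : ∀ i ω, 0 ≤ f i ω := fun i ω => aux_opNorm_nonneg _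
  set E0 : ℝ≥0∞ := ∫⁻ ω, ENNReal.ofReal (f 0 ω) ∂P with hE0def
  have hQid : ∀ i, IdentDistrib (Q i) (Q 0) P P := fun i =>
    (hiid_ident i).comp measurable_fst
  have hE : ∀ i, ∫⁻ ω, ENNReal.ofReal (f i ω) ∂P = E0 := fun i =>
    ((hQid i).comp (ENNReal.measurable_ofReal.comp aux_continuous.measurable)).lintegral_eq
  have hE0top : E0 ≠ ⊤ := by
    have h1 : E0 = ∫⁻ ω, ‖f 0 ω‖ₑ ∂P := by
      refine lintegral_congr fun ω => ?_
      rw [Real.enorm_eq_ofReal (hfnonneg 0 ω)]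
    rw [h1]
    exact hQint.hasFiniteIntegral.ne
  have hsm : (0 : ℝ) < Real.sqrt m := Real.sqrt_pos.2 (by exact_mod_cast hm)
  rw [ENNReal.tendsto_atTop_zero]
  intro δ hδ
  rcases eq_or_ne δ ⊤ with hδtop | hδtop
  · exact ⟨0, fun n _ => hδtop ▸ le_top⟩
  set δ3 : ℝ≥0∞ := δ / 3 with hδ3def
  have hδ30 : 0 < δ3 := ENNReal.div_pos hδ.ne' (by norm_num)
  have hδ3top : δ3 ≠ ⊤ := by
    simp only [hδ3def]
    exact (ENNReal.div_lt_top hδtop (by norm_num)).ne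
  set M : ℝ := (E0 / δ3).toReal + 1 with hMdef
  have hM0 : 0 < M := by
    have := ENNReal.toReal_nonneg (a := E0 / δ3); positivity
  have hCM : E0 / ENNReal.ofReal M ≤ δ3 := by
    rw [ENNReal.div_le_iff_le_mul (Or.inl (by simp [ENNReal.ofReal_pos.2 hM0, hM0]))
      (Or.inl ENNReal.ofReal_ne_top)]
    have h1 : E0 / δ3 ≤ ENNReal.ofReal M := by
      calc E0 / δ3 = ENNReal.ofReal ((E0 / δ3).toReal) := by
            rw [ENNReal.ofReal_toReal (ENNReal.div_lt_top hE0top hδ30.ne').ne]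
        _ ≤ ENNReal.ofReal M := ENNReal.ofReal_le_ofReal (by simp [hMdef])
    calc E0 = δ3 * (E0 / δ3) := (ENNReal.mul_div_cancel hδ30.ne' hδ3top).symm
      _ ≤ δ3 * ENNReal.ofReal M := mul_le_mul_right h1 _
  clear_value E0
  set a : ℝ := ε / (2 * Real.sqrt m * M * (cR + 1)) with hadef
  have ha : 0 < a := by
    apply div_pos hε
    positivity
  have hprod : Real.sqrt m * (a * (1 + cR)) * M = ε / 2 := by
    rw [hadef]
    have h1 : Real.sqrt m ≠ 0 := hsm.ne'
    have h2 : M ≠ 0 := hM0.ne'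
    have h3 : cR + 1 ≠ 0 := by positivity
    field_simp
    ring
  clear_value a
  -- the three bad events
  set A : ℕ → Set Ω := fun n => {ω | ∃ v ∈ K, a < ‖ghat n ω v - g v‖} with hA
  set B : ℕ → Set Ω := fun n => {ω | ∃ i < n, a < ‖Vhat n i ω - V i ω‖} with hB
  set S : ℕ → Ω → ℝ := fun n ω => (n : ℝ)⁻¹ * ∑ i ∈ Finset.range n, f i ω with hS
  set Cs : ℕ → Set Ω := fun n => {ω | ENNReal.ofReal M ≤ ENNReal.ofReal (S n ω)} with hCs
  -- Markov bound on Cs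
  have hSae : ∀ n, AEMeasurable (fun ω => ENNReal.ofReal (S n ω)) P := by
    intro n
    exact ENNReal.measurable_ofReal.comp_aemeasurable
      (aemeasurable_const.mul (Finset.aemeasurable_fun_sum _ fun i _ => hfae i))
  have hCsbound : ∀ n, 1 ≤ n → P (Cs n) ≤ δ3 := by
    intro n hn
    have hmarkov := meas_ge_le_lintegral_div (hSae n) (ε := ENNReal.ofReal M)
      (ENNReal.ofReal_pos.2 hM0).ne' ENNReal.ofReal_ne_top
    refine le_trans hmarkov (le_trans ?_ hCM)
    refine ENNReal.div_le_div_right ?_ _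
    refine le_of_eq ?_
    have hn0 : (0:ℝ) ≤ (n : ℝ)⁻¹ := by positivity
    have h1 : ∀ ω, ENNReal.ofReal (S n ω)
        = ENNReal.ofReal ((n:ℝ)⁻¹) * ∑ i ∈ Finset.range n, ENNReal.ofReal (f i ω) := by
      intro ω
      rw [hS]
      rw [ENNReal.ofReal_mul hn0, ENNReal.ofReal_sum_of_nonneg (fun i _ => hfnonneg i ω)]
    calc ∫⁻ ω, ENNReal.ofReal (S n ω) ∂P
        = ∫⁻ ω, ENNReal.ofReal ((n:ℝ)⁻¹) * ∑ i ∈ Finset.range n, ENNReal.ofReal (f i ω) ∂P :=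
          lintegral_congr h1
      _ = ENNReal.ofReal ((n:ℝ)⁻¹) * ∫⁻ ω, ∑ i ∈ Finset.range n, ENNReal.ofReal (f i ω) ∂P :=
          lintegral_const_mul'' _ (Finset.aemeasurable_fun_sum _ fun i _ =>
            ENNReal.measurable_ofReal.comp_aemeasurable (hfae i))
      _ = ENNReal.ofReal ((n:ℝ)⁻¹) * ∑ i ∈ Finset.range n, ∫⁻ ω, ENNReal.ofReal (f i ω) ∂P := by
          congr 1
          exact lintegral_finset_sum' _ fun i _ =>
            ENNReal.measurable_ofReal.comp_aemeasurable (hfae i)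
      _ = ENNReal.ofReal ((n:ℝ)⁻¹) * ((n : ℝ≥0∞) * E0) := by
          rw [Finset.sum_congr rfl fun i _ => hE i]
          simp [Finset.sum_const, mul_comm]
      _ = (ENNReal.ofReal ((n:ℝ)⁻¹) * (n : ℝ≥0∞)) * E0 := by ring
      _ = E0 := by
          have hnne : ((n:ℝ)) ≠ 0 := by positivity
          rw [← ENNReal.ofReal_natCast, ← ENNReal.ofReal_mul hn0,
            inv_mul_cancel₀ hnne]
          simp
  -- the event inclusion
  have hincl : ∀ n : ℕ, 1 ≤ n → {ω | ε <
        ‖(n : ℝ)⁻¹ • (∑ i ∈ Finset.range n, Matrix.of (Q i ω) *ᵥ ghat n ω (Vhat n i ω))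
          - (n : ℝ)⁻¹ • (∑ i ∈ Finset.range n, Matrix.of (Q i ω) *ᵥ g (V i ω))‖}
      ⊆ A n ∪ B n ∪ Cs n := by
    intro n hn ω hω
    by_contra hnot
    simp only [Set.mem_union, not_or] at hnot
    obtain ⟨⟨hnA, hnB⟩, hnC⟩ := hnot
    have hAω : ∀ v ∈ K, ‖ghat n ω v - g v‖ ≤ a := by
      intro v hv
      by_contra h
      exact hnA ⟨v, hv, not_le.1 h⟩
    have hBω : ∀ i < n, ‖Vhat n i ω - V i ω‖ ≤ a := by
      intro i hi
      by_contra h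
      exact hnB ⟨i, hi, not_le.1 h⟩
    have hSω : S n ω ≤ M := by
      by_contra h
      exact hnC (ENNReal.ofReal_le_ofReal (not_le.1 h).le)
    have hwi : ∀ i < n, ‖ghat n ω (Vhat n i ω) - g (V i ω)‖ ≤ a * (1 + cR) := by
      intro i hi
      have h1 : ‖ghat n ω (Vhat n i ω) - g (Vhat n i ω)‖ ≤ a := hAω _ (hVhatK n i ω)
      have h2 : ‖g (Vhat n i ω) - g (V i ω)‖ ≤ cR * a := by
        have := hgc.dist_le_mul _ (hVhatK n i ω) _ (hVK i ω)
        rw [dist_eq_norm, dist_eq_norm] at this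
        exact this.trans (mul_le_mul_of_nonneg_left (hBω i hi) hcR0)
      calc ‖ghat n ω (Vhat n i ω) - g (V i ω)‖
          ≤ ‖ghat n ω (Vhat n i ω) - g (Vhat n i ω)‖ + ‖g (Vhat n i ω) - g (V i ω)‖ :=
            norm_sub_le_norm_sub_add_norm_sub _ _ _
        _ ≤ a + cR * a := add_le_add h1 h2
        _ = a * (1 + cR) := by ring
    have hΔ : ‖(n : ℝ)⁻¹ • (∑ i ∈ Finset.range n, Matrix.of (Q i ω) *ᵥ ghat n ω (Vhat n i ω))
          - (n : ℝ)⁻¹ • (∑ i ∈ Finset.range n, Matrix.of (Q i ω) *ᵥ g (V i ω))‖ ≤ ε / 2 := by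
      have hrw : (n : ℝ)⁻¹ • (∑ i ∈ Finset.range n, Matrix.of (Q i ω) *ᵥ ghat n ω (Vhat n i ω))
          - (n : ℝ)⁻¹ • (∑ i ∈ Finset.range n, Matrix.of (Q i ω) *ᵥ g (V i ω))
          = (n : ℝ)⁻¹ • (∑ i ∈ Finset.range n,
              Matrix.of (Q i ω) *ᵥ (ghat n ω (Vhat n i ω) - g (V i ω))) := by
        rw [← smul_sub, ← Finset.sum_sub_distrib]
        congr 1
        exact Finset.sum_congr rfl fun i _ => (Matrix.mulVec_sub _ _ _).symm
      rw [hrw, norm_smul, Real.norm_eq_abs, abs_of_nonneg (by positivity : (0:ℝ) ≤ (n:ℝ)⁻¹)]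
      have hCnn : (0:ℝ) ≤ Real.sqrt m * (a * (1 + cR)) := by positivity
      calc (n:ℝ)⁻¹ * ‖∑ i ∈ Finset.range n,
              Matrix.of (Q i ω) *ᵥ (ghat n ω (Vhat n i ω) - g (V i ω))‖
          ≤ (n:ℝ)⁻¹ * ∑ i ∈ Finset.range n,
              ‖Matrix.of (Q i ω) *ᵥ (ghat n ω (Vhat n i ω) - g (V i ω))‖ :=
            mul_le_mul_of_nonneg_left (norm_sum_le _ _) (by positivity)
        _ ≤ (n:ℝ)⁻¹ * ∑ i ∈ Finset.range n, f i ω * (Real.sqrt m * (a * (1 + cR))) := by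
            apply mul_le_mul_of_nonneg_left _ (by positivity)
            apply Finset.sum_le_sum
            intro i hi
            calc ‖Matrix.of (Q i ω) *ᵥ (ghat n ω (Vhat n i ω) - g (V i ω))‖
                ≤ f i ω * (Real.sqrt m * ‖ghat n ω (Vhat n i ω) - g (V i ω)‖) :=
                  aux_mulVec_norm_le _ _
              _ ≤ f i ω * (Real.sqrt m * (a * (1 + cR))) := by
                  apply mul_le_mul_of_nonneg_left _ (hfnonneg i ω)
                  exact mul_le_mul_of_nonneg_left (hwi i (Finset.mem_range.1 hi)) hsm.le
        _ = (Real.sqrt m * (a * (1 + cR))) * S n ω := by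
            rw [hS, ← Finset.sum_mul]; ring
        _ ≤ (Real.sqrt m * (a * (1 + cR))) * M := mul_le_mul_of_nonneg_left hSω hCnn
        _ = ε / 2 := hprod
    rw [Set.mem_setOf_eq] at hω
    linarith
  -- combine
  have h1 : ∀ᶠ n in atTop, P (A n) < δ3 := (hg_unif a ha).eventually_lt_const hδ30
  have h2 : ∀ᶠ n in atTop, P (B n) < δ3 := (hV_unif a ha).eventually_lt_const hδ30
  have h3 : ∀ᶠ n in atTop, 1 ≤ n := eventually_ge_atTop 1
  obtain ⟨N, hN⟩ := (h1.and (h2.and h3)).exists_forall_of_atTop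
  refine ⟨N, fun n hn => ?_⟩
  obtain ⟨hn1, hn2, hn3⟩ := hN n hn
  calc P _ ≤ P (A n ∪ B n ∪ Cs n) := measure_mono (hincl n hn3)
    _ ≤ P (A n ∪ B n) + P (Cs n) := measure_union_le _ _
    _ ≤ (P (A n) + P (B n)) + P (Cs n) := add_le_add_left (measure_union_le _ _) _
    _ ≤ (δ3 + δ3) + δ3 := add_le_add (add_le_add hn1.le hn2.le) (hCsbound n hn3)
    _ = δ := ENNReal.add_thirds δ
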